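/- Let (X, F) be a measurable space, μ : F → [0,1] a monotone measure, p, q ≥ 1, and let f, g, h : X → [0,1] be measurable functions such that f, g are comonotone and f, h are comonotone. Then for every A ∈ F, ((S)∫_A f dμ) · ((S)∫_A g dμ)^{p/(p+q)} · ((S)∫_A h dμ)^{q/(p+q)} ≤ ((S)∫_A f^p g^p dμ)^{1/(p+q)} · ((S)∫_A f^q h^q dμ)^{1/(p+q)}. -/

import Mathlib

/-- The Sugeno integral of a `[0,1]`-valued function `f` on `A` with respect to
a `[0,1]`-valued monotone measure `μ`:
`(S)∫_A f dμ = sup_{α ∈ [0,1]} min(α, μ(A ∩ {f ≥ α}))`. -/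
noncomputable def sugeno01 {X : Type*} (μ : Set X → ℝ) (f : X → ℝ)
    (A : Set X) : ℝ :=
  ⨆ α : Set.Icc (0:ℝ) 1, min α.1 (μ (A ∩ {x | α.1 ≤ f x}))

section Aux

variable {X : Type*} [MeasurableSpace X]

instance : Nonempty (Set.Icc (0:ℝ) 1) := ⟨⟨0, by norm_num⟩⟩

theorem sugeno01_bdd (μ : Set X → ℝ) (f : X → ℝ) (A : Set X) :
    BddAbove (Set.range fun α : Set.Icc (0:ℝ) 1 =>
      min α.1 (μ (A ∩ {x | α.1 ≤ f x}))) := by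
  refine ⟨1, ?_⟩
  rintro y ⟨α, rfl⟩
  exact le_trans (min_le_left _ _) α.2.2

theorem sugeno01_nonneg (μ : Set X → ℝ)
    (hμY : ∀ A : Set X, MeasurableSet A → μ A ∈ Set.Icc (0:ℝ) 1)
    (f : X → ℝ) (hf : Measurable f)
    (A : Set X) (hA : MeasurableSet A) : 0 ≤ sugeno01 μ f A := by
  have h := le_ciSup (sugeno01_bdd μ f A) (⟨0, by norm_num⟩ : Set.Icc (0:ℝ) 1)
  refine le_trans ?_ h
  simp only [le_min_iff, le_refl, true_and]
  exact (hμY _ (hA.inter (measurableSet_le measurable_const hf))).1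

/-- Chebyshev type inequality for comonotone functions. -/
theorem sugeno01_chebyshev (μ : Set X → ℝ)
    (hμY : ∀ A : Set X, MeasurableSet A → μ A ∈ Set.Icc (0:ℝ) 1)
    (hμmono : ∀ A B : Set X, MeasurableSet A → MeasurableSet B → A ⊆ B → μ A ≤ μ B)
    (u v : X → ℝ) (hu : Measurable u) (hv : Measurable v)
    (huY : ∀ x, u x ∈ Set.Icc (0:ℝ) 1) (hvY : ∀ x, v x ∈ Set.Icc (0:ℝ) 1)
    (huv : ∀ x y, 0 ≤ (u x - u y) * (v x - v y))
    (A : Set X) (hA : MeasurableSet A) :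
    sugeno01 μ u A * sugeno01 μ v A ≤ sugeno01 μ (fun x => u x * v x) A := by
  have key : ∀ α β : Set.Icc (0:ℝ) 1,
      min α.1 (μ (A ∩ {x | α.1 ≤ u x})) * min β.1 (μ (A ∩ {x | β.1 ≤ v x})) ≤
        sugeno01 μ (fun x => u x * v x) A := by
    rintro ⟨α, hα0, hα1⟩ ⟨β, hβ0, hβ1⟩
    set U : Set X := A ∩ {x | α ≤ u x} with hU
    set V : Set X := A ∩ {x | β ≤ v x} with hV
    have hUm : MeasurableSet U := hA.inter (measurableSet_le measurable_const hu)
    have hVm : MeasurableSet V := hA.inter (measurableSet_le measurable_const hv)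
    have hWm : MeasurableSet (A ∩ {x | α * β ≤ u x * v x}) :=
      hA.inter (measurableSet_le measurable_const (hu.mul hv))
    -- the level sets form a chain
    have hchain : U ⊆ V ∨ V ⊆ U := by
      by_contra hc
      push_neg at hc
      obtain ⟨x, hxU, hxV⟩ := Set.not_subset.mp hc.1
      obtain ⟨y, hyV, hyU⟩ := Set.not_subset.mp hc.2
      have hx2 : ¬ (β ≤ v x) := fun h => hxV ⟨hxU.1, h⟩
      have hy2 : ¬ (α ≤ u y) := fun h => hyU ⟨hyV.1, h⟩
      have h1 : α ≤ u x := hxU.2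
      have h2 : β ≤ v y := hyV.2
      have h3 : v x < β := lt_of_not_ge hx2
      have h4 : u y < α := lt_of_not_ge hy2
      nlinarith [huv x y]
    -- U ∩ V ⊆ {α β ≤ u v}
    have hsub : U ∩ V ⊆ A ∩ {x | α * β ≤ u x * v x} := by
      rintro x ⟨⟨hxA, hxu⟩, ⟨-, hxv⟩⟩
      exact ⟨hxA, mul_le_mul hxu hxv hβ0 (huY x).1⟩
    have hmeas : min (μ U) (μ V) ≤ μ (A ∩ {x | α * β ≤ u x * v x}) := by
      rcases hchain with hc | hc
      · have : U ∩ V = U := Set.inter_eq_left.mpr hc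
        calc min (μ U) (μ V) ≤ μ U := min_le_left _ _
          _ = μ (U ∩ V) := by rw [this]
          _ ≤ _ := hμmono _ _ (hUm.inter hVm) hWm hsub
      · have : U ∩ V = V := Set.inter_eq_right.mpr hc
        calc min (μ U) (μ V) ≤ μ V := min_le_right _ _
          _ = μ (U ∩ V) := by rw [this]
          _ ≤ _ := hμmono _ _ (hUm.inter hVm) hWm hsub
    have hle : min α (μ U) * min β (μ V) ≤
        min (α * β) (μ (A ∩ {x | α * β ≤ u x * v x})) := by
      have hμU := hμY U hUm
      have hμV := hμY V hVm
      have h1 : min α (μ U) * min β (μ V) ≤ α * β :=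
        mul_le_mul (min_le_left _ _) (min_le_left _ _)
          (le_min hβ0 hμV.1) hα0
      have h2 : min α (μ U) * min β (μ V) ≤ min (μ U) (μ V) := by
        rcases min_le_iff.mp (le_refl (min (μ U) (μ V))) with _ | _ <;>
        · refine le_min ?_ ?_
          · calc min α (μ U) * min β (μ V) ≤ μ U * 1 :=
                mul_le_mul (min_le_right _ _) (le_trans (min_le_left _ _) hβ1)
                  (le_min hβ0 hμV.1) hμU.1
              _ = μ U := mul_one _
          · calc min α (μ U) * min β (μ V) ≤ 1 * μ V :=
                mul_le_mul (le_trans (min_le_left _ _) hα1) (min_le_right _ _)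
                  (le_min hβ0 hμV.1) zero_le_one
              _ = μ V := one_mul _
      exact le_min h1 (le_trans h2 hmeas)
    exact le_trans hle
      (le_ciSup (sugeno01_bdd μ (fun x => u x * v x) A)
        (⟨α * β, mul_nonneg hα0 hβ0, mul_le_one₀ hα1 hβ0 hβ1⟩ : Set.Icc (0:ℝ) 1))
  -- combine using sup manipulations
  have hv0 : 0 ≤ sugeno01 μ v A := sugeno01_nonneg μ hμY v hv A hA
  rw [sugeno01, Real.iSup_mul_of_nonneg hv0]
  refine ciSup_le fun α => ?_
  have hα0 : 0 ≤ min α.1 (μ (A ∩ {x | α.1 ≤ u x})) :=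
    le_min α.2.1 (hμY _ (hA.inter (measurableSet_le measurable_const hu))).1
  rw [show sugeno01 μ v A = ⨆ β : Set.Icc (0:ℝ) 1,
      min β.1 (μ (A ∩ {x | β.1 ≤ v x})) from rfl,
    Real.mul_iSup_of_nonneg hα0]
  exact ciSup_le fun β => key α β

/-- Power inequality for the Sugeno integral. -/
theorem sugeno01_rpow_le (μ : Set X → ℝ)
    (hμY : ∀ A : Set X, MeasurableSet A → μ A ∈ Set.Icc (0:ℝ) 1)
    (hμmono : ∀ A B : Set X, MeasurableSet A → MeasurableSet B → A ⊆ B → μ A ≤ μ B)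
    (u : X → ℝ) (hu : Measurable u) (huY : ∀ x, u x ∈ Set.Icc (0:ℝ) 1)
    (r : ℝ) (hr : 1 ≤ r)
    (A : Set X) (hA : MeasurableSet A) :
    sugeno01 μ u A ^ r ≤ sugeno01 μ (fun x => u x ^ r) A := by
  have hr0 : (0:ℝ) < r := lt_of_lt_of_le one_pos hr
  have hmr : Measurable fun x => u x ^ r := (hu.pow measurable_const)
  set T := sugeno01 μ (fun x => u x ^ r) A with hT
  have hT0 : 0 ≤ T := sugeno01_nonneg μ hμY _ hmr A hA
  have hstep : sugeno01 μ u A ≤ T ^ (1/r) := by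
    refine ciSup_le fun α => ?_
    have hUm : MeasurableSet (A ∩ {x | α.1 ≤ u x}) :=
      hA.inter (measurableSet_le measurable_const hu)
    have hμU := hμY _ hUm
    set m := min α.1 (μ (A ∩ {x | α.1 ≤ u x})) with hm
    have hm0 : 0 ≤ m := le_min α.2.1 hμU.1
    have hkey : m ^ r ≤ T := by
      have h1 : m ^ r ≤ min (α.1 ^ r) (μ (A ∩ {x | α.1 ≤ u x})) := by
        refine le_min (Real.rpow_le_rpow hm0 (min_le_left _ _) hr0.le) ?_
        calc m ^ r ≤ μ (A ∩ {x | α.1 ≤ u x}) ^ r :=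
              Real.rpow_le_rpow hm0 (min_le_right _ _) hr0.le
          _ ≤ μ (A ∩ {x | α.1 ≤ u x}) := by
              rcases eq_or_lt_of_le hμU.1 with h | h
              · rw [← h, Real.zero_rpow (ne_of_gt hr0)]
              · calc μ (A ∩ {x | α.1 ≤ u x}) ^ r
                    ≤ μ (A ∩ {x | α.1 ≤ u x}) ^ (1:ℝ) :=
                      Real.rpow_le_rpow_of_exponent_ge h hμU.2 hr
                  _ = _ := Real.rpow_one _
      have h2 : μ (A ∩ {x | α.1 ≤ u x}) ≤ μ (A ∩ {x | α.1 ^ r ≤ u x ^ r}) := by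
        refine hμmono _ _ hUm (hA.inter (measurableSet_le measurable_const hmr)) ?_
        rintro x ⟨hxA, hx⟩
        exact ⟨hxA, Real.rpow_le_rpow α.2.1 hx hr0.le⟩
      have h3 := le_ciSup (sugeno01_bdd μ (fun x => u x ^ r) A)
        (⟨α.1 ^ r, Real.rpow_nonneg α.2.1 r,
          Real.rpow_le_one α.2.1 α.2.2 hr0.le⟩ : Set.Icc (0:ℝ) 1)
      exact le_trans (le_trans h1 (min_le_min le_rfl h2)) h3
    calc m = (m ^ r) ^ (1/r) := by
          rw [← Real.rpow_mul hm0, mul_one_div, div_self (ne_of_gt hr0), Real.rpow_one]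
      _ ≤ T ^ (1/r) := Real.rpow_le_rpow (Real.rpow_nonneg hm0 r) hkey (by positivity)
  have hS0 : 0 ≤ sugeno01 μ u A := sugeno01_nonneg μ hμY u hu A hA
  calc sugeno01 μ u A ^ r ≤ (T ^ (1/r)) ^ r :=
        Real.rpow_le_rpow hS0 hstep hr0.le
    _ = T := by
        rw [← Real.rpow_mul hT0, one_div, inv_mul_cancel₀ (ne_of_gt hr0), Real.rpow_one]

/-- Comonotonicity is preserved by powers. -/
theorem comono_rpow {f g : X → ℝ} (hf0 : ∀ x, 0 ≤ f x) (hg0 : ∀ x, 0 ≤ g x)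
    (hfg : ∀ x y, 0 ≤ (f x - f y) * (g x - g y)) {r s : ℝ} (hr : 0 ≤ r) (hs : 0 ≤ s) :
    ∀ x y, 0 ≤ (f x ^ r - f y ^ r) * (g x ^ s - g y ^ s) := by
  intro x y
  rcases lt_trichotomy (f x) (f y) with h | h | h
  · have h1 : f x ^ r ≤ f y ^ r := Real.rpow_le_rpow (hf0 x) h.le hr
    have h2 : g x ≤ g y := by nlinarith [hfg x y]
    have h3 : g x ^ s ≤ g y ^ s := Real.rpow_le_rpow (hg0 x) h2 hs
    nlinarith
  · rw [h, sub_self, zero_mul]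
  · have h1 : f y ^ r ≤ f x ^ r := Real.rpow_le_rpow (hf0 y) h.le hr
    have h2 : g y ≤ g x := by nlinarith [hfg x y]
    have h3 : g y ^ s ≤ g x ^ s := Real.rpow_le_rpow (hg0 y) h2 hs
    exact mul_nonneg (by linarith) (by linarith)

end Aux

/-- Carlson type inequality for the Sugeno integral of comonotone functions:
`((S)∫_A f dμ) ((S)∫_A g dμ)^{p/(p+q)} ((S)∫_A h dμ)^{q/(p+q)} ≤
((S)∫_A f^p g^p dμ)^{1/(p+q)} ((S)∫_A f^q h^q dμ)^{1/(p+q)}`. -/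
theorem carlson_sugeno_wang {X : Type*} [MeasurableSpace X]
    -- μ : F → [0,1] is a monotone measure
    (μ : Set X → ℝ)
    (hμY : ∀ A : Set X, MeasurableSet A → μ A ∈ Set.Icc (0:ℝ) 1)
    (hμ0 : μ ∅ = 0) (hμX : 0 < μ Set.univ)
    (hμmono : ∀ A B : Set X, MeasurableSet A → MeasurableSet B → A ⊆ B → μ A ≤ μ B)
    -- p, q ≥ 1
    (p q : ℝ) (hp : 1 ≤ p) (hq : 1 ≤ q)
    -- f, g, h : X → [0,1] measurable
    (f g h : X → ℝ) (hf : Measurable f) (hg : Measurable g) (hh : Measurable h)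
    (hfY : ∀ x, f x ∈ Set.Icc (0:ℝ) 1) (hgY : ∀ x, g x ∈ Set.Icc (0:ℝ) 1)
    (hhY : ∀ x, h x ∈ Set.Icc (0:ℝ) 1)
    -- f, g comonotone and f, h comonotone
    (hfg : ∀ x y, 0 ≤ (f x - f y) * (g x - g y))
    (hfh : ∀ x y, 0 ≤ (f x - f y) * (h x - h y))
    (A : Set X) (hA : MeasurableSet A) :
    sugeno01 μ f A * (sugeno01 μ g A) ^ (p/(p+q)) * (sugeno01 μ h A) ^ (q/(p+q)) ≤
      (sugeno01 μ (fun x => f x ^ p * g x ^ p) A) ^ (1/(p+q)) *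
      (sugeno01 μ (fun x => f x ^ q * h x ^ q) A) ^ (1/(p+q)) := by
  have hpq : (0:ℝ) < p + q := by linarith
  set F := sugeno01 μ f A with hF
  set G := sugeno01 μ g A with hG
  set H := sugeno01 μ h A with hH
  have hF0 : 0 ≤ F := sugeno01_nonneg μ hμY f hf A hA
  have hG0 : 0 ≤ G := sugeno01_nonneg μ hμY g hg A hA
  have hH0 : 0 ≤ H := sugeno01_nonneg μ hμY h hh A hA
  have hp0 : (0:ℝ) < p := lt_of_lt_of_le one_pos hp
  have hq0 : (0:ℝ) < q := lt_of_lt_of_le one_pos hq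
  -- key bounds for the two integrals on the right
  have key : ∀ (r : ℝ), 1 ≤ r → ∀ (k : X → ℝ), Measurable k →
      (∀ x, k x ∈ Set.Icc (0:ℝ) 1) → (∀ x y, 0 ≤ (f x - f y) * (k x - k y)) →
      F ^ r * sugeno01 μ k A ^ r ≤ sugeno01 μ (fun x => f x ^ r * k x ^ r) A := by
    intro r hr k hk hkY hfk
    have hr0 : (0:ℝ) < r := lt_of_lt_of_le one_pos hr
    have h1 : F ^ r ≤ sugeno01 μ (fun x => f x ^ r) A :=
      sugeno01_rpow_le μ hμY hμmono f hf hfY r hr A hA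
    have h2 : sugeno01 μ k A ^ r ≤ sugeno01 μ (fun x => k x ^ r) A :=
      sugeno01_rpow_le μ hμY hμmono k hk hkY r hr A hA
    have h3 : sugeno01 μ (fun x => f x ^ r) A * sugeno01 μ (fun x => k x ^ r) A ≤
        sugeno01 μ (fun x => f x ^ r * k x ^ r) A := by
      refine sugeno01_chebyshev μ hμY hμmono _ _ (hf.pow measurable_const) (hk.pow measurable_const)
        (fun x => ⟨Real.rpow_nonneg (hfY x).1 r, Real.rpow_le_one (hfY x).1 (hfY x).2 hr0.le⟩)
        (fun x => ⟨Real.rpow_nonneg (hkY x).1 r, Real.rpow_le_one (hkY x).1 (hkY x).2 hr0.le⟩)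
        (comono_rpow (fun x => (hfY x).1) (fun x => (hkY x).1) hfk hr0.le hr0.le) A hA
    have h4 : 0 ≤ sugeno01 μ (fun x => k x ^ r) A :=
      sugeno01_nonneg μ hμY _ (hk.pow measurable_const) A hA
    calc F ^ r * sugeno01 μ k A ^ r
        ≤ sugeno01 μ (fun x => f x ^ r) A * sugeno01 μ (fun x => k x ^ r) A :=
          mul_le_mul h1 h2 (Real.rpow_nonneg (sugeno01_nonneg μ hμY k hk A hA) r)
            (le_trans (Real.rpow_nonneg hF0 r) h1)
      _ ≤ _ := h3
  have key1 := key p hp g hg hgY hfg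
  have key2 := key q hq h hh hhY hfh
  -- take the (1/(p+q))-th power of both
  have e1 : (F ^ p * G ^ p) ^ (1/(p+q)) ≤
      (sugeno01 μ (fun x => f x ^ p * g x ^ p) A) ^ (1/(p+q)) :=
    Real.rpow_le_rpow (mul_nonneg (Real.rpow_nonneg hF0 p) (Real.rpow_nonneg hG0 p))
      key1 (by positivity)
  have e2 : (F ^ q * H ^ q) ^ (1/(p+q)) ≤
      (sugeno01 μ (fun x => f x ^ q * h x ^ q) A) ^ (1/(p+q)) :=
    Real.rpow_le_rpow (mul_nonneg (Real.rpow_nonneg hF0 q) (Real.rpow_nonneg hH0 q))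
      key2 (by positivity)
  have l1 : (F ^ p * G ^ p) ^ (1/(p+q)) = F ^ (p/(p+q)) * G ^ (p/(p+q)) := by
    rw [Real.mul_rpow (Real.rpow_nonneg hF0 p) (Real.rpow_nonneg hG0 p),
      ← Real.rpow_mul hF0, ← Real.rpow_mul hG0, mul_one_div]
  have l2 : (F ^ q * H ^ q) ^ (1/(p+q)) = F ^ (q/(p+q)) * H ^ (q/(p+q)) := by
    rw [Real.mul_rpow (Real.rpow_nonneg hF0 q) (Real.rpow_nonneg hH0 q),
      ← Real.rpow_mul hF0, ← Real.rpow_mul hH0, mul_one_div]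
  have lF : F ^ (p/(p+q)) * F ^ (q/(p+q)) = F := by
    rw [← Real.rpow_add' hF0 (by rw [← add_div, div_self (ne_of_gt hpq)]; norm_num),
      ← add_div, div_self (ne_of_gt hpq), Real.rpow_one]
  calc F * G ^ (p/(p+q)) * H ^ (q/(p+q))
      = (F ^ (p/(p+q)) * G ^ (p/(p+q))) * (F ^ (q/(p+q)) * H ^ (q/(p+q))) := by
        rw [show (F ^ (p/(p+q)) * G ^ (p/(p+q))) * (F ^ (q/(p+q)) * H ^ (q/(p+q)))
            = (F ^ (p/(p+q)) * F ^ (q/(p+q))) * G ^ (p/(p+q)) * H ^ (q/(p+q)) by ring, lF]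
    _ ≤ _ := by
        rw [← l1, ← l2]
        exact mul_le_mul e1 e2
          (Real.rpow_nonneg (mul_nonneg (Real.rpow_nonneg hF0 q) (Real.rpow_nonneg hH0 q)) _)
          (le_trans (Real.rpow_nonneg (mul_nonneg (Real.rpow_nonneg hF0 p)
            (Real.rpow_nonneg hG0 p)) _) e1)
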